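/- (Rankine–Hugoniot velocity of a single shock.) Let δ ≠ 0 and 𝔞̂ be real with g(y) = 𝔞̂·(e^{δy} − 1) > 0 for all y ≥ 1 (g(0) = 0), and let σ, θ be real with θ = σ + δ and Z(σ), Z(θ) < ∞. Define the density ρ(τ) := Σ_{z=0}^∞ z·μ^τ(z) and the mean jump rate h(τ) := Σ_{z=0}^∞ g(z)·μ^τ(z). Then ρ(σ) ≠ ρ(θ) and the Rankine–Hugoniot velocity equals the shock random walk rate: (h(σ) − h(θ))/(ρ(σ) − ρ(θ)) = (e^{δ} − 1)·(e^σ + 𝔞̂). -/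

import Mathlib

open Real

noncomputable def gfact (g : ℕ → ℝ) (z : ℕ) : ℝ := ∏ y ∈ Finset.Icc 1 z, g y

noncomputable def ZN (g : ℕ → ℝ) (θ : ℝ) : ℝ := ∑' z : ℕ, exp (θ * z) / gfact g z

noncomputable def muN (g : ℕ → ℝ) (θ : ℝ) (z : ℕ) : ℝ := exp (θ * z) / (gfact g z * ZN g θ)

/-- Rankine–Hugoniot velocity of a single shock: for `g(y) = 𝔞̂·(e^{δy} - 1)` positive on
`{1, 2, ...}` and `θ = σ + δ`, the densities at the two parameters differ and
`(h(σ) - h(θ)) / (ρ(σ) - ρ(θ)) = (e^δ - 1)·(e^σ + 𝔞̂)`. -/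
theorem rankine_hugoniot_single_shock
    (𝔞 δ σ θ : ℝ) (hδ : δ ≠ 0)
    (g : ℕ → ℝ) (hg : ∀ y : ℕ, g y = 𝔞 * (exp (δ * y) - 1))
    (hgpos : ∀ y : ℕ, 1 ≤ y → 0 < g y)
    (hθ : θ = σ + δ)
    (hZσ : Summable fun z : ℕ => exp (σ * z) / gfact g z)
    (hZθ : Summable fun z : ℕ => exp (θ * z) / gfact g z) :
    (∑' z : ℕ, (z : ℝ) * muN g σ z) ≠ (∑' z : ℕ, (z : ℝ) * muN g θ z) ∧
    ((∑' z : ℕ, g z * muN g σ z) - ∑' z : ℕ, g z * muN g θ z) /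
        ((∑' z : ℕ, (z : ℝ) * muN g σ z) - ∑' z : ℕ, (z : ℝ) * muN g θ z)
      = (exp δ - 1) * (exp σ + 𝔞) := by
  have hgf : ∀ z, 0 < gfact g z := fun z =>
    Finset.prod_pos fun y hy => hgpos y (Finset.mem_Icc.mp hy).1
  have hgf0 : gfact g 0 = 1 := by simp [gfact]
  have hgfs : ∀ z : ℕ, gfact g (z + 1) = gfact g z * g (z + 1) := by
    intro z
    exact Finset.prod_Icc_succ_top (Nat.succ_le_succ (Nat.zero_le z)) g
  have h𝔞 : 𝔞 ≠ 0 := by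
    intro h
    have h1 := hgpos 1 le_rfl
    rw [hg 1, h, zero_mul] at h1
    exact lt_irrefl 0 h1
  set a : ℕ → ℝ := fun z : ℕ => exp (σ * z) / gfact g z with ha_def
  set b : ℕ → ℝ := fun z : ℕ => exp (θ * z) / gfact g z with hb_def
  have hapos : ∀ z, 0 < a z := fun z => div_pos (exp_pos _) (hgf z)
  have hbpos : ∀ z, 0 < b z := fun z => div_pos (exp_pos _) (hgf z)
  have ha0 : a 0 = 1 := by simp [ha_def, hgf0]
  have hb0 : b 0 = 1 := by simp [hb_def, hgf0]
  have hba : ∀ z : ℕ, b z = exp (δ * z) * a z := by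
    intro z
    simp only [ha_def, hb_def, hθ, add_mul, exp_add]
    ring
  set q : ℝ := exp σ / 𝔞 with hq_def
  have hrec : ∀ z : ℕ, b (z + 1) = a (z + 1) + q * a z := by
    intro z
    have hgz : g (z + 1) ≠ 0 := ne_of_gt (hgpos (z + 1) (Nat.succ_le_succ (Nat.zero_le z)))
    have hexp : exp (δ * ((z : ℕ) + 1 : ℕ)) = g (z + 1) / 𝔞 + 1 := by
      rw [hg (z + 1)]
      field_simp
      ring
    rw [hba (z + 1), hexp]
    simp only [ha_def]
    rw [hgfs z]
    have hσs : exp (σ * ((z : ℕ) + 1 : ℕ)) = exp (σ * z) * exp σ := by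
      rw [← exp_add]; push_cast; ring_nf
    rw [hσs, hq_def]
    field_simp [hgz, h𝔞, (hgf z).ne']
    ring
  -- positivity of the partition functions
  have hA : ZN g σ = ∑' z, a z := rfl
  have hB : ZN g θ = ∑' z, b z := rfl
  have hApos : 0 < ∑' z, a z := Summable.tsum_pos hZσ (fun z => le_of_lt (hapos z)) 0 (hapos 0)
  have hBpos : 0 < ∑' z, b z := Summable.tsum_pos hZθ (fun z => le_of_lt (hbpos z)) 0 (hbpos 0)
  -- summability of the mean series
  have key : Summable (fun z : ℕ => (z : ℝ) * a z) ∧ Summable (fun z : ℕ => (z : ℝ) * b z) := by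
    have hzb_of_a : Summable (fun z : ℕ => (z : ℝ) * a z) →
        Summable (fun z : ℕ => (z : ℝ) * b z) := by
      intro hSa
      have h1 : Summable (fun z : ℕ => ((z + 1 : ℕ) : ℝ) * a (z + 1)) :=
        (summable_nat_add_iff (f := fun z : ℕ => (z : ℝ) * a z) 1).mpr hSa
      have h2 : Summable (fun z : ℕ => q * ((z : ℝ) * a z + a z)) :=
        (hSa.add hZσ).mul_left q
      have h3 : Summable (fun z : ℕ => ((z + 1 : ℕ) : ℝ) * b (z + 1)) := by
        have := h1.add h2
        refine this.congr fun z => ?_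
        rw [hrec z]
        push_cast
        ring
      exact (summable_nat_add_iff (f := fun z : ℕ => (z : ℝ) * b z) 1).mp h3
    rcases hδ.lt_or_gt with hneg | hpos
    · -- δ < 0
      have h𝔞neg : 𝔞 < 0 := by
        have h1 := hgpos 1 le_rfl
        rw [hg 1] at h1
        have he : exp (δ * (1 : ℕ)) - 1 < 0 := by
          have : exp (δ * (1 : ℕ)) < 1 := by
            rw [← exp_zero]
            exact exp_lt_exp.mpr (by push_cast; linarith)
          linarith
        by_contra h
        push_neg at h
        nlinarith
      set r : ℝ := exp σ / (-𝔞) with hr_def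
      have hrpos : 0 < r := div_pos (exp_pos _) (by linarith)
      have hrq : q = -r := by rw [hq_def, hr_def]; field_simp
      -- Summable (z * b z) by comparison with a
      have hSb : Summable (fun z : ℕ => (z : ℝ) * b z) := by
        refine Summable.of_nonneg_of_le
          (fun z => mul_nonneg (Nat.cast_nonneg z) (le_of_lt (hbpos z)))
          (fun z => ?_) (hZσ.mul_left (1 / (-δ)))
        have hz : (z : ℝ) ≤ exp (-δ * z) / (-δ) := by
          have h1 : (-δ) * z + 1 ≤ exp (-δ * z) := Real.add_one_le_exp _
          rw [div_eq_inv_mul, ← mul_le_mul_iff_right₀ (show (0:ℝ) < -δ by linarith)]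
          calc (-δ) * z ≤ exp (-δ * z) - 1 := by linarith
            _ ≤ exp (-δ * z) := by linarith [exp_pos (-δ * (z:ℝ))]
            _ = (-δ) * ((-δ)⁻¹ * exp (-δ * z)) := by field_simp
        have hab : a z = exp (-δ * z) * b z := by
          rw [hba z, ← mul_assoc, ← exp_add]
          simp
        calc (z : ℝ) * b z ≤ (exp (-δ * z) / (-δ)) * b z :=
              mul_le_mul_of_nonneg_right hz (le_of_lt (hbpos z))
          _ = 1 / (-δ) * a z := by rw [hab]; ring
      -- ratio lower bound on a
      have hrlb : ∀ z : ℕ, r ^ z ≤ a z := by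
        intro z
        induction z with
        | zero => simp [ha0]
        | succ n ih =>
          have har : a (n + 1) = b (n + 1) + r * a n := by
            have := hrec n
            rw [hrq] at this
            linarith
          calc r ^ (n + 1) = r * r ^ n := by ring
            _ ≤ r * a n := by
                exact mul_le_mul_of_nonneg_left ih (le_of_lt hrpos)
            _ ≤ b (n + 1) + r * a n := by linarith [hbpos (n + 1)]
            _ = a (n + 1) := har.symm
      have hr1 : r < 1 := by
        have htend : Filter.Tendsto (fun z : ℕ => r ^ z) Filter.atTop (nhds 0) :=
          squeeze_zero (fun z => le_of_lt (pow_pos hrpos z)) hrlb hZσ.tendsto_atTop_zero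
        have := tendsto_pow_atTop_nhds_zero_iff.mp htend
        rw [abs_of_pos hrpos] at this
        exact this
      -- partial sums of z * a z are bounded
      set Tb : ℝ := ∑' z : ℕ, (z : ℝ) * b z with hTb_def
      set A : ℝ := ∑' z, a z with hA_def
      have hTbnn : 0 ≤ Tb :=
        tsum_nonneg fun z => mul_nonneg (Nat.cast_nonneg z) (le_of_lt (hbpos z))
      have hAnn : 0 ≤ A := le_of_lt hApos
      set M : ℝ := (Tb + r * A) / (1 - r) with hM_def
      have hMnn : 0 ≤ M := div_nonneg (by nlinarith) (by linarith)
      have hbound : ∀ n : ℕ, ∑ z ∈ Finset.range n, (z : ℝ) * a z ≤ M := by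
        intro n
        induction n with
        | zero => simpa using hMnn
        | succ n ih =>
          rw [Finset.sum_range_succ' (fun z : ℕ => (z : ℝ) * a z) n]
          have hsplit : ∀ w : ℕ, ((w + 1 : ℕ) : ℝ) * a (w + 1)
              = ((w + 1 : ℕ) : ℝ) * b (w + 1) + r * ((w : ℝ) * a w + a w) := by
            intro w
            have := hrec w
            rw [hrq] at this
            have har : a (w + 1) = b (w + 1) + r * a w := by linarith
            rw [har]
            push_cast
            ring
          have h1 : ∑ w ∈ Finset.range n, ((w + 1 : ℕ) : ℝ) * a (w + 1)
              = (∑ w ∈ Finset.range n, ((w + 1 : ℕ) : ℝ) * b (w + 1))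
                + r * ((∑ w ∈ Finset.range n, (w : ℝ) * a w)
                  + ∑ w ∈ Finset.range n, a w) := by
            calc ∑ w ∈ Finset.range n, ((w + 1 : ℕ) : ℝ) * a (w + 1)
                = ∑ w ∈ Finset.range n,
                    (((w + 1 : ℕ) : ℝ) * b (w + 1) + r * ((w : ℝ) * a w + a w)) :=
                  Finset.sum_congr rfl fun w _ => hsplit w
              _ = _ := by
                  rw [Finset.sum_add_distrib, ← Finset.mul_sum, Finset.sum_add_distrib]
          have h2 : ∑ w ∈ Finset.range n, ((w + 1 : ℕ) : ℝ) * b (w + 1) ≤ Tb := by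
            have : ∑ w ∈ Finset.range n, ((w + 1 : ℕ) : ℝ) * b (w + 1)
                = ∑ z ∈ Finset.range (n + 1), (z : ℝ) * b z := by
              rw [Finset.sum_range_succ' (fun z : ℕ => (z : ℝ) * b z) n]
              norm_num
            rw [this]
            exact Summable.sum_le_tsum _ (fun z _ => mul_nonneg (Nat.cast_nonneg z)
              (le_of_lt (hbpos z))) hSb
          have h3 : ∑ w ∈ Finset.range n, a w ≤ A :=
            Summable.sum_le_tsum _ (fun z _ => le_of_lt (hapos z)) hZσ
          have h4 : (0 : ℝ) * a 0 = 0 := by ring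
          have hM1 : Tb + r * (M + A) = M := by
            have h1r : (1 : ℝ) - r ≠ 0 := by linarith
            rw [hM_def]
            field_simp [h1r]
            ring
          calc ∑ w ∈ Finset.range n, ((w:ℕ) + 1 : ℕ) * a ((w:ℕ) + 1) + (0:ℕ) * a 0
              = ∑ w ∈ Finset.range n, ((w + 1 : ℕ) : ℝ) * a (w + 1) := by push_cast; ring
            _ = (∑ w ∈ Finset.range n, ((w + 1 : ℕ) : ℝ) * b (w + 1))
                + r * ((∑ w ∈ Finset.range n, (w : ℝ) * a w)
                  + ∑ w ∈ Finset.range n, a w) := h1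
            _ ≤ Tb + r * (M + A) := by
                have := mul_le_mul_of_nonneg_left (add_le_add ih h3) (le_of_lt hrpos)
                linarith
            _ = M := hM1
      have hSa : Summable (fun z : ℕ => (z : ℝ) * a z) :=
        summable_of_sum_range_le
          (fun z => mul_nonneg (Nat.cast_nonneg z) (le_of_lt (hapos z))) hbound
      exact ⟨hSa, hSb⟩
    · -- δ > 0
      have hSa : Summable (fun z : ℕ => (z : ℝ) * a z) := by
        refine Summable.of_nonneg_of_le
          (fun z => mul_nonneg (Nat.cast_nonneg z) (le_of_lt (hapos z)))
          (fun z => ?_) (hZθ.mul_left (1 / δ))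
        have hz : (z : ℝ) ≤ exp (δ * z) / δ := by
          have h1 : δ * z + 1 ≤ exp (δ * z) := Real.add_one_le_exp _
          rw [le_div_iff₀ hpos]
          nlinarith [exp_pos (δ * (z:ℝ))]
        calc (z : ℝ) * a z ≤ (exp (δ * z) / δ) * a z :=
              mul_le_mul_of_nonneg_right hz (le_of_lt (hapos z))
          _ = 1 / δ * b z := by rw [hba z]; ring
      exact ⟨hSa, hzb_of_a hSa⟩
  obtain ⟨hSa, hSb⟩ := key
  -- abbreviations for the four sums
  set A : ℝ := ∑' z, a z with hA_def
  set B : ℝ := ∑' z, b z with hB_def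
  set Sa : ℝ := ∑' z : ℕ, (z : ℝ) * a z with hSa_def
  set Sb : ℝ := ∑' z : ℕ, (z : ℝ) * b z with hSb_def
  clear_value A B Sa Sb
  -- B = A * (1 + q)
  have hBA : B = A + q * A := by
    have hsum1 : Summable (fun z : ℕ => a (z + 1)) := (summable_nat_add_iff (f := a) 1).mpr hZσ
    have h2 : ∑' z : ℕ, b (z + 1) = (∑' z : ℕ, a (z + 1)) + q * ∑' z : ℕ, a z := by
      rw [← tsum_mul_left, ← Summable.tsum_add hsum1 (hZσ.mul_left q)]
      exact tsum_congr fun z => hrec z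
    have h1 : ∑' z, b z = b 0 + ∑' z : ℕ, b (z + 1) := Summable.tsum_eq_zero_add hZθ
    have h3 : ∑' z, a z = a 0 + ∑' z : ℕ, a (z + 1) := Summable.tsum_eq_zero_add hZσ
    rw [hB_def, hA_def, h1, h2, h3, hb0, ha0]
    ring
  -- Sb = Sa + q * (Sa + A)
  have hSbSa : Sb = Sa + q * (Sa + A) := by
    have hsum1 : Summable (fun z : ℕ => ((z : ℝ) + 1) * a (z + 1)) := by
      have := (summable_nat_add_iff (f := fun z : ℕ => (z : ℝ) * a z) 1).mpr hSa
      exact this.congr fun z => by push_cast; ring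
    have hsum2 : Summable (fun z : ℕ => q * ((z : ℝ) * a z + a z)) :=
      (hSa.add hZσ).mul_left q
    have h1 : Sb = ∑' z : ℕ, ((z : ℝ) + 1) * b (z + 1) := by
      rw [hSb_def]; simpa using Summable.tsum_eq_zero_add hSb
    have h3 : Sa = ∑' z : ℕ, ((z : ℝ) + 1) * a (z + 1) := by
      rw [hSa_def]; simpa using Summable.tsum_eq_zero_add hSa
    have h2 : ∑' z : ℕ, ((z : ℝ) + 1) * b (z + 1)
        = (∑' z : ℕ, ((z : ℝ) + 1) * a (z + 1)) + ∑' z : ℕ, q * ((z : ℝ) * a z + a z) := by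
      rw [← Summable.tsum_add hsum1 hsum2]
      refine tsum_congr fun z => ?_
      rw [hrec z]; push_cast; ring
    have h4 : ∑' z : ℕ, q * ((z : ℝ) * a z + a z) = q * (Sa + A) := by
      rw [tsum_mul_left, Summable.tsum_add hSa hZσ, hSa_def, hA_def]
    rw [h1, h2, h4, ← h3]
  -- the densities
  have hrhoσ : (∑' z : ℕ, (z : ℝ) * muN g σ z) = Sa / A := by
    rw [hSa_def, ← tsum_div_const]
    exact tsum_congr fun z => by
      rw [muN, hA, ← div_div]
      simp only [ha_def]
      ring
  have hrhoθ : (∑' z : ℕ, (z : ℝ) * muN g θ z) = Sb / B := by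
    rw [hSb_def, ← tsum_div_const]
    exact tsum_congr fun z => by
      rw [muN, hB, ← div_div]
      simp only [hb_def]
      ring
  -- the mean jump rates
  have hmean : ∀ τ : ℝ, Summable (fun z : ℕ => exp (τ * z) / gfact g z) →
      (∑' z : ℕ, g z * muN g τ z) = exp τ := by
    intro τ hZ
    have hZpos : 0 < ZN g τ :=
      Summable.tsum_pos hZ (fun z => le_of_lt (div_pos (exp_pos _) (hgf z))) 0
        (div_pos (exp_pos _) (hgf 0))
    have hterm : ∀ z : ℕ, g (z + 1) * muN g τ (z + 1)
        = exp τ * (exp (τ * z) / gfact g z) / ZN g τ := by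
      intro z
      have hgz : g (z + 1) ≠ 0 := ne_of_gt (hgpos (z + 1) (Nat.succ_le_succ (Nat.zero_le z)))
      rw [muN, hgfs z]
      have hτs : exp (τ * ((z : ℕ) + 1 : ℕ)) = exp (τ * z) * exp τ := by
        rw [← exp_add]; push_cast; ring_nf
      rw [hτs]
      field_simp [hgz, (hgf z).ne', ne_of_gt hZpos]
    have hsum1 : Summable (fun z : ℕ => g (z + 1) * muN g τ (z + 1)) := by
      refine ((hZ.mul_left (exp τ)).div_const (ZN g τ)).congr fun z => ?_
      rw [hterm z]
    have hsum : Summable (fun z : ℕ => g z * muN g τ z) :=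
      (summable_nat_add_iff (f := fun z : ℕ => g z * muN g τ z) 1).mp hsum1
    rw [Summable.tsum_eq_zero_add hsum]
    have hg0 : g 0 = 0 := by rw [hg 0]; norm_num
    rw [hg0, zero_mul, zero_add]
    have : ∑' z : ℕ, g (z + 1) * muN g τ (z + 1)
        = ∑' z : ℕ, exp τ * (exp (τ * z) / gfact g z) / ZN g τ :=
      tsum_congr fun z => hterm z
    rw [this, tsum_div_const, tsum_mul_left]
    have hz' : (∑' z : ℕ, exp (τ * z) / gfact g z) ≠ 0 := by
      rw [ZN] at hZpos; exact ne_of_gt hZpos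
    rw [ZN, mul_div_assoc, div_self hz', mul_one]
  have hmσ : (∑' z : ℕ, g z * muN g σ z) = exp σ := hmean σ hZσ
  have hmθ : (∑' z : ℕ, g z * muN g θ z) = exp θ := hmean θ hZθ
  -- arithmetic finish
  have hqA : 1 + q ≠ 0 := by
    intro h
    have : B = A * (1 + q) := by rw [hBA]; ring
    rw [h, mul_zero] at this
    exact (ne_of_gt hBpos) this
  have hqpos : 1 + q > 0 := by
    rcases lt_trichotomy (1 + q) 0 with h | h | h
    · exfalso
      have : B = A * (1 + q) := by rw [hBA]; ring
      nlinarith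
    · exact absurd h hqA
    · exact h
  have hqne : q ≠ 0 := div_ne_zero (ne_of_gt (exp_pos σ)) h𝔞
  have hdiff : Sa / A - Sb / B = -(q / (1 + q)) := by
    have hB' : B = A * (1 + q) := by rw [hBA]; ring
    rw [hB', hSbSa]
    field_simp [hApos.ne', hqA]
    ring
  have h𝔞e : 𝔞 + exp σ ≠ 0 := by
    intro h
    apply hqA
    rw [hq_def]
    field_simp
    linarith
  constructor
  · rw [hrhoσ, hrhoθ]
    intro h
    rw [h] at hdiff
    simp only [sub_self] at hdiff
    have : q / (1 + q) ≠ 0 := div_ne_zero hqne hqA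
    exact this (by linarith)
  · rw [hrhoσ, hrhoθ, hmσ, hmθ, hdiff, hθ, hq_def, exp_add]
    have hq1 : 1 + exp σ / 𝔞 ≠ 0 := by
      intro h; apply h𝔞e; field_simp at h; linarith
    field_simp [h𝔞, h𝔞e, hq1]
    ring
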